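/- Let A be symmetric negative definite with eigendecomposition A = ΘΛΘ᷀, Λ = diag(λ₁,…,λₙ), and suppose K, Σ solve A᷀K + KA + I = 0 and AΣ + ΣA᷀ + I = 0, and M, N solve AM + MA᷀ + ΣCΣ = 0, A᷀N + NA + KBK = 0 with B = b̄b̄᷀, C = c̄c̄᷀. If the supports of β = Λ⁻¹Θ᷀b̄ and γ = Λ⁻¹Θ᷀c̄ are disjoint, then MN = 0, and hence tr(A᷀MN + NMA) = 0. -/

import Mathlib

open Matrix

lemma lyap_entry {n : ℕ} {l : Fin n → ℝ} (hl : ∀ i, l i < 0)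
    {X R : Matrix (Fin n) (Fin n) ℝ}
    (h : Matrix.diagonal l * X + X * Matrix.diagonal l + R = 0) (i j : Fin n) :
    X i j = -R i j / (l i + l j) := by
  have h2 := Matrix.ext_iff.2 h i j
  simp only [Matrix.add_apply, Matrix.diagonal_mul, Matrix.mul_diagonal,
    Matrix.zero_apply] at h2
  have hlij : l i + l j ≠ 0 := by nlinarith [hl i, hl j]
  field_simp
  linarith [h2]


lemma conj_vecMulVec {n : ℕ} (P : Matrix (Fin n) (Fin n) ℝ) (v : Fin n → ℝ) :
    Pᵀ * vecMulVec v v * P = vecMulVec (Pᵀ *ᵥ v) (Pᵀ *ᵥ v) := by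
  rw [Matrix.vecMulVec_eq (Fin 1), Matrix.vecMulVec_eq (Fin 1),
    Matrix.replicateCol_mulVec, Matrix.mulVec_transpose, Matrix.replicateRow_vecMul]
  simp [Matrix.mul_assoc]

set_option maxHeartbeats 1000000 in
theorem disjoint_supports_MN_zero
    (n : ℕ) (A Θ Λ : Matrix (Fin n) (Fin n) ℝ) (l : Fin n → ℝ)
    (hA : A.IsSymm) (hneg : ∀ x : Fin n → ℝ, x ≠ 0 → x ⬝ᵥ A *ᵥ x < 0)
    (hΘ : Θᵀ * Θ = 1) (hΛ : Λ = Matrix.diagonal l) (hdecomp : A = Θ * Λ * Θᵀ)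
    (b c : Fin n → ℝ)
    (B C K Sg M N : Matrix (Fin n) (Fin n) ℝ)
    (hB : B = vecMulVec b b) (hC : C = vecMulVec c c)
    (hK : Aᵀ * K + K * A + 1 = 0) (hSg : A * Sg + Sg * Aᵀ + 1 = 0)
    (hM : A * M + M * Aᵀ + Sg * C * Sg = 0)
    (hN : Aᵀ * N + N * A + K * B * K = 0)
    (β γ : Fin n → ℝ)
    (hβ : β = (Matrix.diagonal l)⁻¹ *ᵥ (Θᵀ *ᵥ b))
    (hγ : γ = (Matrix.diagonal l)⁻¹ *ᵥ (Θᵀ *ᵥ c))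
    (hdisj : ∀ i, β i * γ i = 0) :
    M * N = 0 ∧ (Aᵀ * M * N + N * M * A).trace = 0 := by
  have hOO : Θ * Θᵀ = 1 := mul_eq_one_comm.mp hΘ
  have can1 : ∀ X : Matrix (Fin n) (Fin n) ℝ, Θᵀ * (Θ * X) = X := fun X => by
    rw [← Matrix.mul_assoc, hΘ, Matrix.one_mul]
  have can2 : ∀ X : Matrix (Fin n) (Fin n) ℝ, Θ * (Θᵀ * X) = X := fun X => by
    rw [← Matrix.mul_assoc, hOO, Matrix.one_mul]
  -- eigenvalues are negative
  have hl : ∀ i, l i < 0 := by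
    intro i
    have hx : (Θ *ᵥ Pi.single i 1 : Fin n → ℝ) ≠ 0 := by
      intro h
      have h3 : Θᵀ *ᵥ (Θ *ᵥ Pi.single i 1) = Θᵀ *ᵥ (0 : Fin n → ℝ) := by rw [h]
      rw [Matrix.mulVec_mulVec, hΘ, Matrix.one_mulVec, Matrix.mulVec_zero] at h3
      simpa using congrFun h3 i
    have hq : (Θ *ᵥ Pi.single i 1) ⬝ᵥ A *ᵥ (Θ *ᵥ Pi.single i 1) = l i := by
      rw [hdecomp, hΛ]
      rw [Matrix.mulVec_mulVec, Matrix.mul_assoc, Matrix.mul_assoc, hΘ, Matrix.mul_one]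
      rw [Matrix.dotProduct_mulVec]
      rw [Matrix.vecMul_mulVec, ← Matrix.mul_assoc, hΘ, Matrix.one_mul]
      simp [Matrix.vecMul_diagonal, single_dotProduct]
    have := hneg _ hx
    rw [hq] at this
    exact this
  have hlne : ∀ i, l i ≠ 0 := fun i => ne_of_lt (hl i)
  -- symmetry
  rw [hA.eq] at hK hSg hM hN
  -- conjugation lemma
  have key : ∀ X R : Matrix (Fin n) (Fin n) ℝ,
      A * X + X * A + R = 0 →
      Matrix.diagonal l * (Θᵀ * X * Θ) + (Θᵀ * X * Θ) * Matrix.diagonal l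
        + Θᵀ * R * Θ = 0 := by
    intro X R h
    have e1 : Matrix.diagonal l * (Θᵀ * X * Θ) + (Θᵀ * X * Θ) * Matrix.diagonal l
        + Θᵀ * R * Θ = Θᵀ * (A * X + X * A + R) * Θ := by
      rw [hdecomp, hΛ]
      simp only [Matrix.mul_add, Matrix.add_mul, Matrix.mul_assoc, can1, can2, hΘ,
        Matrix.mul_one, Matrix.one_mul]
    rw [e1, h, Matrix.mul_zero, Matrix.zero_mul]
  -- inverse of diagonal
  have hdiaginv : (Matrix.diagonal l)⁻¹ = Matrix.diagonal (fun i => (l i)⁻¹) := by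
    apply Matrix.inv_eq_left_inv
    rw [Matrix.diagonal_mul_diagonal]
    ext i j
    by_cases hij : i = j <;> simp [hij, Matrix.diagonal_apply, inv_mul_cancel₀ (hlne _),
      Matrix.one_apply]
  set bt : Fin n → ℝ := Θᵀ *ᵥ b with hbt
  set ct : Fin n → ℝ := Θᵀ *ᵥ c with hct
  have hβ' : ∀ i, β i = (l i)⁻¹ * bt i := by
    intro i; rw [hβ, hdiaginv]; simp [Matrix.mulVec_diagonal]
  have hγ' : ∀ i, γ i = (l i)⁻¹ * ct i := by
    intro i; rw [hγ, hdiaginv]; simp [Matrix.mulVec_diagonal]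
  -- K tilde and Sg tilde
  set d : Fin n → ℝ := fun i => -(2 * l i)⁻¹ with hd
  have solveKS : ∀ X : Matrix (Fin n) (Fin n) ℝ, A * X + X * A + 1 = 0 →
      Θᵀ * X * Θ = Matrix.diagonal d := by
    intro X h
    have h1 := key X 1 h
    rw [Matrix.mul_one, hΘ] at h1
    ext i j
    rw [lyap_entry hl h1 i j]
    by_cases hij : i = j
    · subst hij
      simp only [Matrix.one_apply_eq, Matrix.diagonal_apply_eq, hd]
      rw [show l i + l i = 2 * l i by ring, neg_div, inv_eq_one_div]
    · simp [Matrix.one_apply_ne hij, Matrix.diagonal_apply_ne _ hij]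
  have hKt : Θᵀ * K * Θ = Matrix.diagonal d := solveKS K hK
  have hSt : Θᵀ * Sg * Θ = Matrix.diagonal d := solveKS Sg hSg
  -- conjugated rank-one matrices
  have hBt : Θᵀ * B * Θ = vecMulVec bt bt := by
    rw [hB, hbt]; exact conj_vecMulVec Θ b
  have hCt : Θᵀ * C * Θ = vecMulVec ct ct := by
    rw [hC, hct]; exact conj_vecMulVec Θ c
  -- conjugate the KBK / SCS products
  have hKBK : Θᵀ * (K * B * K) * Θ = Matrix.diagonal d * vecMulVec bt bt * Matrix.diagonal d := by
    rw [← hKt, ← hBt]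
    simp only [Matrix.mul_assoc, can1, can2]
  have hSCS : Θᵀ * (Sg * C * Sg) * Θ = Matrix.diagonal d * vecMulVec ct ct * Matrix.diagonal d := by
    rw [← hSt, ← hCt]
    simp only [Matrix.mul_assoc, can1, can2]
  -- entrywise formulas for Mt, Nt
  set Mt : Matrix (Fin n) (Fin n) ℝ := Θᵀ * M * Θ with hMt
  set Nt : Matrix (Fin n) (Fin n) ℝ := Θᵀ * N * Θ with hNt
  have hMteq := key M _ hM
  rw [hSCS] at hMteq
  have hNteq := key N _ hN
  rw [hKBK] at hNteq
  have hNen : ∀ i j, Nt i j = (β i * β j) * (-(1/4) / (l i + l j)) := by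
    intro i j
    rw [hNt, lyap_entry hl hNteq i j]
    simp only [Matrix.diagonal_mul, Matrix.mul_diagonal, Matrix.vecMulVec_apply]
    rw [hβ' i, hβ' j]
    have hi := hlne i; have hj := hlne j
    have hij : l i + l j ≠ 0 := by nlinarith [hl i, hl j]
    have h2i : (2:ℝ) * l i ≠ 0 := mul_ne_zero two_ne_zero hi
    have h2j : (2:ℝ) * l j ≠ 0 := mul_ne_zero two_ne_zero hj
    simp only [hd]
    rw [← mul_div_assoc, div_eq_div_iff hij hij]
    field_simp
    try ring
    try tauto
  have hMen : ∀ i j, Mt i j = (γ i * γ j) * (-(1/4) / (l i + l j)) := by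
    intro i j
    rw [hMt, lyap_entry hl hMteq i j]
    simp only [Matrix.diagonal_mul, Matrix.mul_diagonal, Matrix.vecMulVec_apply]
    rw [hγ' i, hγ' j]
    have hi := hlne i; have hj := hlne j
    have hij : l i + l j ≠ 0 := by nlinarith [hl i, hl j]
    have h2i : (2:ℝ) * l i ≠ 0 := mul_ne_zero two_ne_zero hi
    have h2j : (2:ℝ) * l j ≠ 0 := mul_ne_zero two_ne_zero hj
    simp only [hd]
    rw [← mul_div_assoc, div_eq_div_iff hij hij]
    field_simp
    try ring
    try tauto
  have hMtNt : Mt * Nt = 0 := by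
    ext i j
    simp only [Matrix.mul_apply, Matrix.zero_apply]
    apply Finset.sum_eq_zero
    intro k _
    rw [hMen i k, hNen k j]
    have : β k * γ k = 0 := hdisj k
    calc (γ i * γ k * (-(1/4) / (l i + l k))) * (β k * β j * (-(1/4) / (l k + l j)))
        = (β k * γ k) * (γ i * (-(1/4) / (l i + l k)) * (β j * (-(1/4) / (l k + l j)))) := by ring
      _ = 0 := by rw [this, zero_mul]
  have hNtMt : Nt * Mt = 0 := by
    ext i j
    simp only [Matrix.mul_apply, Matrix.zero_apply]
    apply Finset.sum_eq_zero
    intro k _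
    rw [hNen i k, hMen k j]
    have : β k * γ k = 0 := hdisj k
    calc (β i * β k * (-(1/4) / (l i + l k))) * (γ k * γ j * (-(1/4) / (l k + l j)))
        = (β k * γ k) * (β i * (-(1/4) / (l i + l k)) * (γ j * (-(1/4) / (l k + l j)))) := by ring
      _ = 0 := by rw [this, zero_mul]
  have hMN : M * N = 0 := by
    have e : M * N = Θ * (Mt * Nt) * Θᵀ := by
      rw [hMt, hNt]
      simp only [Matrix.mul_assoc, can1, can2, hOO, Matrix.mul_one]
    rw [e, hMtNt, Matrix.mul_zero, Matrix.zero_mul]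
  have hNM : N * M = 0 := by
    have e : N * M = Θ * (Nt * Mt) * Θᵀ := by
      rw [hMt, hNt]
      simp only [Matrix.mul_assoc, can1, can2, hOO, Matrix.mul_one]
    rw [e, hNtMt, Matrix.mul_zero, Matrix.zero_mul]
  refine ⟨hMN, ?_⟩
  rw [Matrix.mul_assoc Aᵀ, hMN, hNM, Matrix.mul_zero, Matrix.zero_mul, add_zero,
    Matrix.trace_zero]
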